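/- Let G be a connected graph with at least 2 vertices that has a cut vertex (a vertex whose removal disconnects G). Then every connecting hypergraph of G has cost at least |V(G)| − 2; equivalently, the singleton hypergraph {V(G)} is an optimal connecting hypergraph of G. -/

import Mathlib

variable {V : Type*}

/-- The transition consisting of the edges `ab` and `bc`, written `abc`. -/
def transitionOf (a b c : V) : Sym2 (Sym2 V) := s(s(a, b), s(b, c))

/-- `t` is a transition of `G`: an unordered pair of two distinct adjacent edges. -/
def SimpleGraph.IsTransition (G : SimpleGraph V) (t : Sym2 (Sym2 V)) : Prop :=
  ∃ a b c, G.Adj a b ∧ G.Adj b c ∧ a ≠ c ∧ t = transitionOf a b c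

/-- A list of vertices (the support of a walk) is `T`-compatible: every pair of
consecutive edges is either a transition of `T` or a backtrack. -/
def TCompatible (T : Set (Sym2 (Sym2 V))) (l : List V) : Prop :=
  ∀ (i : ℕ) (h : i + 2 < l.length),
    l[i]'(by omega) = l[i + 2]'h ∨
    transitionOf (l[i]'(by omega)) (l[i + 1]'(by omega)) (l[i + 2]'h) ∈ T

/-- `G` is `T`-connected: every two vertices are joined by a `T`-compatible walk. -/
def SimpleGraph.TConnected (G : SimpleGraph V) (T : Set (Sym2 (Sym2 V))) : Prop :=
  ∀ u v : V, ∃ p : G.Walk u v, TCompatible T p.support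

/-- `T` is a connecting transition set of `G`. -/
def SimpleGraph.ConnectingTransitionSet (G : SimpleGraph V)
    (T : Finset (Sym2 (Sym2 V))) : Prop :=
  (∀ t ∈ T, G.IsTransition t) ∧ G.TConnected ↑T

/-- `H` is a connecting hypergraph of `G`: every hyperedge has at least two vertices and
induces a connected subgraph, and every pair of distinct non-adjacent vertices is
contained in a common hyperedge. -/
def SimpleGraph.ConnectingHypergraph (G : SimpleGraph V) (H : Finset (Finset V)) : Prop :=
  (∀ E ∈ H, 2 ≤ E.card ∧ (G.induce (E : Set V)).Connected) ∧
  ∀ u v : V, u ≠ v → ¬G.Adj u v → ∃ E ∈ H, u ∈ E ∧ v ∈ E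

/-- The cost of a hypergraph: the sum over hyperedges of (size − 2). -/
def hcost (H : Finset (Finset V)) : ℕ := ∑ E ∈ H, (E.card - 2)

/-- The quantity τ(G): the sum over co-connected components `C` of `G` with `|C| ≥ 2`
of `|C| − 2` if `G[C]` is connected and `|C| − 1` otherwise. -/
noncomputable def tau {V : Type*} [Fintype V] (G : SimpleGraph V) : ℕ := by
  classical
  haveI : Fintype Gᶜ.ConnectedComponent := Fintype.ofFinite _
  exact ∑ C : Gᶜ.ConnectedComponent,
    if 2 ≤ C.supp.ncard then
      (if (G.induce C.supp).Connected then C.supp.ncard - 2 else C.supp.ncard - 1)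
    else 0



private lemma exists_distinct_step {α : Type*} {r : α → α → Prop} {X Y : α}
    (h : Relation.ReflTransGen r X Y) : X ≠ Y → ∃ a b, a ≠ b ∧ r a b := by
  induction h with
  | refl => exact fun h => absurd rfl h
  | @tail b c hXb hbc ih =>
    intro hne
    by_cases h : b = c
    · subst h; exact ih hne
    · exact ⟨b, c, h, hbc⟩

private lemma rtg_lift {α : Type*} {r r' : α → α → Prop} (φ : α → α)
    (hstep : ∀ a b, r a b → r' (φ a) (φ b)) {X Y : α}
    (h : Relation.ReflTransGen r X Y) :
    Relation.ReflTransGen r' (φ X) (φ Y) := by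
  induction h with
  | refl => exact .refl
  | tail _ hbc ih => exact ih.tail (hstep _ _ hbc)

private lemma union_bound [DecidableEq V] :
    ∀ (n : ℕ) (𝒮 : Finset (Finset V)), 𝒮.card = n → 𝒮.Nonempty →
      (∀ X ∈ 𝒮, ∀ Y ∈ 𝒮, Relation.ReflTransGen
        (fun A B => A ∈ 𝒮 ∧ B ∈ 𝒮 ∧ (A ∩ B).Nonempty) X Y) →
      (𝒮.sup id).card + 𝒮.card ≤ (∑ S ∈ 𝒮, S.card) + 1 := by
  intro n
  induction n using Nat.strong_induction_on with
  | _ n IH =>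
    intro 𝒮 hcard hne hconn
    rcases Nat.lt_or_ge 𝒮.card 2 with hlt | hge
    · have h1 : 𝒮.card = 1 := by
        have := Finset.card_pos.mpr hne; omega
      obtain ⟨S, rfl⟩ := Finset.card_eq_one.mp h1
      simp
    · obtain ⟨X, hX, Y, hY, hXY⟩ := Finset.one_lt_card.mp hge
      obtain ⟨S, T, hSTne, hS, hT, hSTint⟩ := exists_distinct_step (hconn X hX Y hY) hXY
      set R := (𝒮.erase S).erase T with hR
      have hTeS : T ∈ 𝒮.erase S := Finset.mem_erase.mpr ⟨fun h => hSTne h.symm, hT⟩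
      have hRcard : R.card + 2 = 𝒮.card := by
        rw [hR, Finset.card_erase_of_mem hTeS, Finset.card_erase_of_mem hS]
        have : 2 ≤ 𝒮.card := hge
        omega
      have hsum : (∑ A ∈ R, A.card) + T.card + S.card = ∑ A ∈ 𝒮, A.card := by
        rw [hR, Finset.sum_erase_add _ _ hTeS, Finset.sum_erase_add _ _ hS]
      set 𝒮' := insert (S ∪ T) R with h𝒮'
      have hRsub : ∀ A ∈ R, A ∈ 𝒮 := fun A hA =>
        Finset.mem_of_mem_erase (Finset.mem_of_mem_erase hA)
      have hsup : 𝒮'.sup id = 𝒮.sup id := by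
        apply le_antisymm
        · apply Finset.sup_le
          intro A hA
          rcases Finset.mem_insert.mp hA with rfl | hA
          · exact Finset.union_subset (Finset.le_sup (f := id) hS)
              (Finset.le_sup (f := id) hT)
          · exact Finset.le_sup (f := id) (hRsub A hA)
        · apply Finset.sup_le
          intro A hA
          by_cases hAS : A = S
          · subst hAS
            exact (Finset.subset_union_left).trans
              (Finset.le_sup (f := id) (Finset.mem_insert_self _ _))
          by_cases hAT : A = T
          · subst hAT
            exact (Finset.subset_union_right).trans
              (Finset.le_sup (f := id) (Finset.mem_insert_self _ _))
          · exact Finset.le_sup (f := id) (Finset.mem_insert_of_mem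
              (Finset.mem_erase.mpr ⟨hAT, Finset.mem_erase.mpr ⟨hAS, hA⟩⟩))
      -- the map
      set φ : Finset V → Finset V := fun Z => if Z = S ∨ Z = T then S ∪ T else Z with hφ
      have hφmem : ∀ Z ∈ 𝒮, φ Z ∈ 𝒮' := by
        intro Z hZ
        by_cases h : Z = S ∨ Z = T
        · simp only [hφ, if_pos h]; exact Finset.mem_insert_self _ _
        · push_neg at h
          simp only [hφ, if_neg (not_or.mpr h)]
          exact Finset.mem_insert_of_mem
            (Finset.mem_erase.mpr ⟨h.2, Finset.mem_erase.mpr ⟨h.1, hZ⟩⟩)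
      have hφsub : ∀ Z, Z ⊆ φ Z := by
        intro Z
        by_cases h : Z = S ∨ Z = T
        · simp only [hφ, if_pos h]
          rcases h with rfl | rfl
          · exact Finset.subset_union_left
          · exact Finset.subset_union_right
        · simp only [hφ, if_neg h]; exact subset_rfl
      have hconn' : ∀ X' ∈ 𝒮', ∀ Y' ∈ 𝒮', Relation.ReflTransGen
          (fun A B => A ∈ 𝒮' ∧ B ∈ 𝒮' ∧ (A ∩ B).Nonempty) X' Y' := by
        have hrepr : ∀ X' ∈ 𝒮', ∃ ξ ∈ 𝒮, φ ξ = X' := by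
          intro X' hX'
          rcases Finset.mem_insert.mp hX' with rfl | hX'
          · exact ⟨S, hS, by simp [hφ]⟩
          · obtain ⟨h1, h2, h3⟩ : X' ≠ T ∧ X' ≠ S ∧ X' ∈ 𝒮 := by
              have := Finset.mem_erase.mp hX'
              have := Finset.mem_erase.mp this.2
              exact ⟨(Finset.mem_erase.mp hX').1, this.1, this.2⟩
            exact ⟨X', h3, by simp [hφ, h1, h2]⟩
        intro X' hX' Y' hY'
        obtain ⟨ξ, hξ, rfl⟩ := hrepr X' hX'
        obtain ⟨η, hη, rfl⟩ := hrepr Y' hY'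
        refine rtg_lift φ ?_ (hconn ξ hξ η hη)
        rintro A B ⟨hA, hB, c, hc⟩
        exact ⟨hφmem A hA, hφmem B hB,
          ⟨c, Finset.mem_inter.mpr ⟨hφsub A (Finset.mem_inter.mp hc).1,
            hφsub B (Finset.mem_inter.mp hc).2⟩⟩⟩
      have h𝒮'ne : 𝒮'.Nonempty := Finset.insert_nonempty _ _
      have hScard1 : 1 ≤ S.card := Finset.card_pos.mpr ⟨_, Finset.mem_inter.mp
        hSTint.choose_spec |>.1⟩
      have hTcard1 : 1 ≤ T.card := Finset.card_pos.mpr ⟨_, Finset.mem_inter.mp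
        hSTint.choose_spec |>.2⟩
      have hunion : (S ∪ T).card + (S ∩ T).card = S.card + T.card :=
        Finset.card_union_add_card_inter S T
      have hintpos : 1 ≤ (S ∩ T).card := Finset.card_pos.mpr hSTint
      by_cases hmem : S ∪ T ∈ R
      · have h𝒮'eq : 𝒮' = R := Finset.insert_eq_self.mpr hmem
        have hlt' : 𝒮'.card < n := by rw [h𝒮'eq]; omega
        have := IH 𝒮'.card hlt' 𝒮' rfl h𝒮'ne hconn'
        rw [hsup, h𝒮'eq] at this
        omega
      · have hcard' : 𝒮'.card = R.card + 1 := Finset.card_insert_of_notMem hmem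
        have hsum' : ∑ A ∈ 𝒮', A.card = (S ∪ T).card + ∑ A ∈ R, A.card :=
          Finset.sum_insert hmem
        have hlt' : 𝒮'.card < n := by omega
        have := IH 𝒮'.card hlt' 𝒮' rfl h𝒮'ne hconn'
        rw [hsup, hcard', hsum'] at this
        omega

/-- If a connected graph `G` with at least 2 vertices has a cut vertex, then every
connecting hypergraph of `G` has cost at least `|V(G)| − 2`; equivalently, the
singleton hypergraph `{V(G)}` is an optimal connecting hypergraph. -/

theorem stmt9 {V : Type*} [Fintype V] [DecidableEq V] (G : SimpleGraph V)
    (hc : G.Connected) (h2 : 2 ≤ Fintype.card V)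
    (p : V) (hp : ¬(G.induce {v : V | v ≠ p}).Connected) :
    (∀ H : Finset (Finset V), G.ConnectingHypergraph H →
      Fintype.card V - 2 ≤ hcost H) ∧
    G.ConnectingHypergraph {Finset.univ} ∧
    hcost ({Finset.univ} : Finset (Finset V)) = Fintype.card V - 2 := by
  classical
  have hnt : Nontrivial V := Fintype.one_lt_card_iff_nontrivial.mp h2
  refine ⟨?_, ?_, ?_⟩
  · -- main lower bound
    intro H hH
    obtain ⟨q, hq⟩ := exists_ne p
    have hSne : Nonempty {v : V | v ≠ p} := ⟨⟨q, hq⟩⟩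
    rw [SimpleGraph.connected_iff] at hp
    push_neg at hp
    have hpre : ¬ (G.induce {v : V | v ≠ p}).Preconnected := fun h => (hp h).false hSne.some
    obtain ⟨x, y, hxy⟩ : ∃ x y : {v : V | v ≠ p},
        ¬ (G.induce {v : V | v ≠ p}).Reachable x y := by
      by_contra h
      push_neg at h
      exact hpre fun a b => h a b
    set Arel : V → Prop := fun v => ∃ h : v ∈ {v : V | v ≠ p},
      (G.induce {v : V | v ≠ p}).Reachable x ⟨v, h⟩ with hArel
    have hclosed : ∀ u v : V, Arel u → v ≠ p → G.Adj u v → Arel v := by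
      rintro u v ⟨hu, hr⟩ hv hadj
      exact ⟨hv, hr.trans (SimpleGraph.Adj.reachable (by simpa using hadj))⟩
    have hAx : Arel ↑x := ⟨x.2, by exact SimpleGraph.Reachable.refl _⟩
    have hAy : ¬ Arel ↑y := by
      rintro ⟨h, hr⟩
      exact hxy hr
    have hAp : ∀ v : V, Arel v → v ≠ p := fun v hv => hv.1
    -- walks inside a hyperedge avoiding p stay in A
    have hwalk : ∀ (E : Finset V), p ∉ E → ∀ (u v : ↥(E : Set V)),
        (G.induce (E : Set V)).Walk u v → Arel ↑u → Arel ↑v := by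
      intro E hpE u v w
      induction w with
      | nil => exact id
      | @cons a b c h w ih =>
        intro hu
        refine ih ?_
        have hadj : G.Adj ↑a ↑b := by simpa using h
        have hbp : (↑b : V) ≠ p := by
          intro hEq
          exact hpE (hEq ▸ (Finset.mem_coe.mp b.2))
        exact hclosed _ _ hu hbp hadj
    have hmemp : ∀ E ∈ H, (∃ a ∈ E, Arel a) → (∃ b ∈ E, b ≠ p ∧ ¬ Arel b) → p ∈ E := by
      rintro E hE ⟨a, haE, ha⟩ ⟨b, hbE, hbp, hb⟩
      by_contra hpE
      have hconn := (hH.1 E hE).2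
      obtain ⟨w⟩ := hconn.preconnected ⟨a, Finset.mem_coe.mpr haE⟩
        ⟨b, Finset.mem_coe.mpr hbE⟩
      exact hb (hwalk E hpE _ _ w ha)
    set H' : Finset (Finset V) := H.filter
      (fun E => (∃ a ∈ E, Arel a) ∧ ∃ b ∈ E, b ≠ p ∧ ¬ Arel b) with hH'def
    have hH'sub : H' ⊆ H := Finset.filter_subset _ _
    have hpH' : ∀ E ∈ H', p ∈ E := by
      intro E hE
      obtain ⟨hEH, h1, h2⟩ := Finset.mem_filter.mp hE
      exact hmemp E hEH h1 h2
    have hcrossE : ∀ a b : V, Arel a → b ≠ p → ¬ Arel b →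
        ∃ E ∈ H', a ∈ E ∧ b ∈ E := by
      intro a b ha hbp hb
      have hne : a ≠ b := fun h => hb (h ▸ ha)
      have hnadj : ¬ G.Adj a b := fun h => hb (hclosed a b ha hbp h)
      obtain ⟨E, hE, haE, hbE⟩ := hH.2 a b hne hnadj
      exact ⟨E, Finset.mem_filter.mpr ⟨hE, ⟨a, haE, ha⟩, ⟨b, hbE, hbp, hb⟩⟩, haE, hbE⟩
    have hcard3 : ∀ E ∈ H', 3 ≤ E.card := by
      intro E hE
      obtain ⟨hEH, ⟨a, haE, ha⟩, ⟨b, hbE, hbp, hb⟩⟩ := Finset.mem_filter.mp hE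
      have hap : a ≠ p := hAp a ha
      have hab : a ≠ b := fun h => hb (h ▸ ha)
      have hsub : ({p, a, b} : Finset V) ⊆ E := by
        intro z hz
        simp only [Finset.mem_insert, Finset.mem_singleton] at hz
        rcases hz with rfl | rfl | rfl
        · exact hpH' E hE
        · exact haE
        · exact hbE
      have : ({p, a, b} : Finset V).card = 3 := by
        rw [Finset.card_insert_of_notMem (by simp [Ne.symm hap, Ne.symm hbp]),
          Finset.card_insert_of_notMem (by simp [hab]), Finset.card_singleton]
      calc 3 = ({p, a, b} : Finset V).card := this.symm
        _ ≤ E.card := Finset.card_le_card hsub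
    set 𝒮 : Finset (Finset V) := H'.image (fun E => E.erase p) with h𝒮def
    have hinj : ∀ E ∈ H', ∀ F ∈ H', E.erase p = F.erase p → E = F := by
      intro E hE F hF h
      rw [← Finset.insert_erase (hpH' E hE), h, Finset.insert_erase (hpH' F hF)]
    -- coverage
    have hcover : Finset.univ.erase p ⊆ 𝒮.sup id := by
      intro v hv
      have hvp : v ≠ p := (Finset.mem_erase.mp hv).1
      by_cases hvA : Arel v
      · obtain ⟨E, hE, hvE, _⟩ := hcrossE v ↑y hvA y.2 hAy
        exact Finset.mem_sup.mpr ⟨E.erase p, Finset.mem_image_of_mem _ hE,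
          Finset.mem_erase.mpr ⟨hvp, hvE⟩⟩
      · obtain ⟨E, hE, _, hvE⟩ := hcrossE ↑x v hAx hvp hvA
        exact Finset.mem_sup.mpr ⟨E.erase p, Finset.mem_image_of_mem _ hE,
          Finset.mem_erase.mpr ⟨hvp, hvE⟩⟩
    have h𝒮ne : 𝒮.Nonempty := by
      obtain ⟨E, hE, _, _⟩ := hcrossE ↑x ↑y hAx y.2 hAy
      exact ⟨E.erase p, Finset.mem_image_of_mem _ hE⟩
    -- connectivity of 𝒮
    have h𝒮conn : ∀ X ∈ 𝒮, ∀ Y ∈ 𝒮, Relation.ReflTransGen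
        (fun A B => A ∈ 𝒮 ∧ B ∈ 𝒮 ∧ (A ∩ B).Nonempty) X Y := by
      intro X hX Y hY
      obtain ⟨E, hE, rfl⟩ := Finset.mem_image.mp hX
      obtain ⟨F, hF, rfl⟩ := Finset.mem_image.mp hY
      obtain ⟨_, ⟨a, haE, ha⟩, _⟩ := Finset.mem_filter.mp hE
      obtain ⟨_, _, ⟨b, hbF, hbp, hb⟩⟩ := Finset.mem_filter.mp hF
      obtain ⟨K, hK, haK, hbK⟩ := hcrossE a b ha hbp hb
      have hZ : K.erase p ∈ 𝒮 := Finset.mem_image_of_mem _ hK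
      have hap : a ≠ p := hAp a ha
      refine Relation.ReflTransGen.tail (Relation.ReflTransGen.single
        ⟨hX, hZ, ⟨a, Finset.mem_inter.mpr ⟨Finset.mem_erase.mpr ⟨hap, haE⟩,
          Finset.mem_erase.mpr ⟨hap, haK⟩⟩⟩⟩)
        ⟨hZ, hY, ⟨b, Finset.mem_inter.mpr ⟨Finset.mem_erase.mpr ⟨hbp, hbK⟩,
          Finset.mem_erase.mpr ⟨hbp, hbF⟩⟩⟩⟩
    have hbound := union_bound 𝒮.card 𝒮 rfl h𝒮ne h𝒮conn
    -- sums
    have hs1 : ∑ T ∈ 𝒮, T.card = ∑ E ∈ H', (E.card - 1) := by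
      rw [h𝒮def, Finset.sum_image hinj]
      exact Finset.sum_congr rfl fun E hE => by
        rw [Finset.card_erase_of_mem (hpH' E hE)]
    have hk : 𝒮.card = H'.card := Finset.card_image_of_injOn hinj
    have hs3 : (∑ E ∈ H', (E.card - 2)) + H'.card = ∑ E ∈ H', (E.card - 1) := by
      rw [Finset.card_eq_sum_ones H', ← Finset.sum_add_distrib]
      exact Finset.sum_congr rfl fun E hE => by
        have := hcard3 E hE; omega
    have hs2 : (∑ E ∈ H', (E.card - 2)) ≤ hcost H :=
      Finset.sum_le_sum_of_subset hH'sub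
    have hcov : Fintype.card V - 1 ≤ (𝒮.sup id).card := by
      have := Finset.card_le_card hcover
      rwa [Finset.card_erase_of_mem (Finset.mem_univ p), Finset.card_univ] at this
    omega
  · -- {univ} is a connecting hypergraph
    constructor
    · intro E hE
      rw [Finset.mem_singleton] at hE
      subst hE
      refine ⟨by simpa using h2, ?_⟩
      rw [Finset.coe_univ]
      exact (SimpleGraph.induceUnivIso G).connected_iff.mpr hc
    · intro u v _ _
      exact ⟨Finset.univ, Finset.mem_singleton_self _, Finset.mem_univ u,
        Finset.mem_univ v⟩
  · simp [hcost]
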